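/- arXiv:1605.05601 — 3 statements merged into one kernel-verified Lean document; each statement's English description precedes it below -/
import Mathlib

section
/- Let s(n) denote the number of strings of length n over the three-letter alphabet {E, L, R} in which no two consecutive letters both belong to {L, R} (i.e., formally, the cardinality of the set of functions f : Fin n → Fin 3, where letter 0 represents E, such that there is no index i with both f(i) ≠ 0 and f(i+1) ≠ 0). Then s satisfies the recursion s(n+2) = s(n+1) + 2·s(n) for all natural numbers n. -/
def J : ℕ → ℕ
  | 0 => 0
  | 1 => 1
  | n + 2 => J (n + 1) + 2 * J n

def s (n : ℕ) : ℕ :=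
  Fintype.card {f : Fin n → Fin 3 //
    ∀ i : Fin n, ∀ h : (i : ℕ) + 1 < n,
      ¬(f i ≠ 0 ∧ f ⟨(i : ℕ) + 1, h⟩ ≠ 0)}

abbrev Adm (n : ℕ) (f : Fin n → Fin 3) : Prop :=
  ∀ i : Fin n, ∀ h : (i : ℕ) + 1 < n, ¬(f i ≠ 0 ∧ f ⟨(i : ℕ) + 1, h⟩ ≠ 0)

abbrev Adm' (n : ℕ) (f : Fin n → Fin 3) : Prop :=
  ∀ j : ℕ, ∀ h : j + 1 < n,
    ¬(f ⟨j, Nat.lt_of_succ_lt h⟩ ≠ 0 ∧ f ⟨j + 1, h⟩ ≠ 0)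

lemma adm_iff {n : ℕ} {f : Fin n → Fin 3} : Adm n f ↔ Adm' n f := by
  constructor
  · intro hf j h
    exact hf ⟨j, Nat.lt_of_succ_lt h⟩ h
  · intro hf i h
    exact hf (i : ℕ) h

lemma cons_mk_zero {m : ℕ} (x : Fin 3) (p : Fin m → Fin 3) (h : 0 < m + 1) :
    (Fin.cons x p : Fin (m+1) → Fin 3) ⟨0, h⟩ = x := by
  have e : (⟨0, h⟩ : Fin (m+1)) = 0 := by ext; simp
  rw [e, Fin.cons_zero]

lemma cons_mk_succ {m : ℕ} (x : Fin 3) (p : Fin m → Fin 3) (j : ℕ) (h : j + 1 < m + 1) :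
    (Fin.cons x p : Fin (m+1) → Fin 3) ⟨j + 1, h⟩ = p ⟨j, Nat.lt_of_succ_lt_succ h⟩ := by
  have e : (⟨j + 1, h⟩ : Fin (m+1)) = (⟨j, Nat.lt_of_succ_lt_succ h⟩ : Fin m).succ := by
    ext; simp
  rw [e, Fin.cons_succ]

lemma Adm'.tail {m : ℕ} {f : Fin (m + 1) → Fin 3} (hf : Adm' (m + 1) f) :
    Adm' m (Fin.tail f) := by
  intro j h
  have := hf (j + 1) (by omega)
  simp only [Fin.tail]
  have e1 : (⟨j, Nat.lt_of_succ_lt h⟩ : Fin m).succ = ⟨j + 1, by omega⟩ := by ext; simp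
  have e2 : (⟨j + 1, h⟩ : Fin m).succ = ⟨j + 1 + 1, by omega⟩ := by ext; simp
  rw [e1, e2]
  exact this

lemma Adm'.cons_zero {m : ℕ} {f : Fin m → Fin 3} (hf : Adm' m f) :
    Adm' (m + 1) (Fin.cons 0 f) := by
  intro j h
  match j with
  | 0 =>
    rw [cons_mk_zero]
    simp
  | j + 1 =>
    rw [cons_mk_succ, cons_mk_succ]
    exact hf j (by omega)

lemma Adm'.cons {m : ℕ} {f : Fin (m + 1) → Fin 3} (hf : Adm' (m + 1) f)
    (h0 : f 0 = 0) (x : Fin 3) : Adm' (m + 2) (Fin.cons x f) := by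
  intro j h
  match j with
  | 0 =>
    rw [cons_mk_succ]
    have e : (⟨0, Nat.lt_of_succ_lt_succ h⟩ : Fin (m+1)) = 0 := by ext; simp
    rw [e, h0]
    simp
  | j + 1 =>
    rw [cons_mk_succ, cons_mk_succ]
    exact hf j (by omega)

def admEquiv (n : ℕ) :
    {f : Fin (n + 2) → Fin 3 // Adm' (n + 2) f} ≃
      {f : Fin (n + 1) → Fin 3 // Adm' (n + 1) f} ⊕
        Fin 2 × {f : Fin n → Fin 3 // Adm' n f} where
  toFun f :=
    if h : f.1 0 = 0 then
      Sum.inl ⟨Fin.tail f.1, f.2.tail⟩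
    else
      Sum.inr ⟨(f.1 0).pred h, ⟨Fin.tail (Fin.tail f.1), f.2.tail.tail⟩⟩
  invFun x :=
    match x with
    | Sum.inl g => ⟨Fin.cons 0 g.1, g.2.cons_zero⟩
    | Sum.inr (c, g) => ⟨Fin.cons c.succ (Fin.cons 0 g.1),
        (g.2.cons_zero).cons (Fin.cons_zero _ _) _⟩
  left_inv f := by
    dsimp only
    by_cases h : f.1 0 = 0
    · rw [dif_pos h]
      apply Subtype.ext
      show Fin.cons 0 (Fin.tail f.1) = f.1
      rw [← h, Fin.cons_self_tail]
    · rw [dif_neg h]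
      apply Subtype.ext
      show Fin.cons ((f.1 0).pred h).succ (Fin.cons 0 (Fin.tail (Fin.tail f.1))) = f.1
      have h1 : f.1 ⟨1, by omega⟩ = 0 := by
        have hp := f.2 0 (by omega)
        have e : (⟨0, by omega⟩ : Fin (n+2)) = 0 := by ext; simp
        rw [e] at hp
        by_contra hc
        exact hp ⟨h, hc⟩
      funext i
      rcases i with ⟨iv, hiv⟩
      match iv with
      | 0 =>
        rw [cons_mk_zero, Fin.succ_pred]
        exact congrArg f.1 (by ext; simp)
      | 1 =>
        rw [cons_mk_succ, cons_mk_zero]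
        exact h1.symm
      | j + 2 =>
        rw [cons_mk_succ, cons_mk_succ]
        show Fin.tail (Fin.tail f.1) ⟨j, by omega⟩ = f.1 ⟨j + 2, hiv⟩
        simp only [Fin.tail]
        exact congrArg f.1 (by ext; simp [Fin.val_succ])
  right_inv x := by
    match x with
    | Sum.inl g =>
      dsimp only
      rw [dif_pos (Fin.cons_zero _ _)]
      refine congrArg Sum.inl (Subtype.ext ?_)
      funext i
      simp [Fin.tail]
    | Sum.inr (c, g) =>
      dsimp only
      have hne : (Fin.cons c.succ (Fin.cons 0 g.1) : Fin (n+2) → Fin 3) 0 ≠ 0 := by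
        rw [Fin.cons_zero]
        exact Fin.succ_ne_zero c
      rw [dif_neg hne]
      refine congrArg Sum.inr (Prod.ext ?_ ?_)
      · show ((Fin.cons c.succ (Fin.cons 0 g.1) : Fin (n+2) → Fin 3) 0).pred hne = c
        simp
      · apply Subtype.ext
        funext i
        simp [Fin.tail]

def admEquiv' (m : ℕ) :
    {f : Fin m → Fin 3 // Adm m f} ≃ {f : Fin m → Fin 3 // Adm' m f} :=
  Equiv.subtypeEquivRight (fun _ => adm_iff)

theorem s_recursion (n : ℕ) : s (n + 2) = s (n + 1) + 2 * s n := by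
  have key := Fintype.card_congr
    (((admEquiv' (n+2)).trans (admEquiv n)).trans
      (Equiv.sumCongr (admEquiv' (n+1)).symm
        (Equiv.prodCongr (Equiv.refl (Fin 2)) (admEquiv' n).symm)))
  simp only [Fintype.card_sum, Fintype.card_prod, Fintype.card_fin] at key
  have e2 : s (n + 2) = Fintype.card {f : Fin (n+2) → Fin 3 // Adm (n+2) f} := rfl
  have e1 : s (n + 1) = Fintype.card {f : Fin (n+1) → Fin 3 // Adm (n+1) f} := rfl
  have e0 : s n = Fintype.card {f : Fin n → Fin 3 // Adm n f} := rfl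
  rw [e2, e1, e0]
  omega
end

section
/- For every natural number n ≥ 1, the number of strings of length n over the three-letter alphabet {E, L, R} whose first letter is E and in which no two consecutive letters both belong to {L, R} (i.e., the cardinality of the set of functions f : Fin n → Fin 3 with f(0) = 0 such that there is no index i with both f(i) ≠ 0 and f(i+1) ≠ 0) equals the Jacobsthal number J(n+1). -/
def P (n : ℕ) (f : Fin n → Fin 3) : Prop :=
  ∀ i : Fin n, ∀ h : (i : ℕ) + 1 < n, ¬(f i ≠ 0 ∧ f ⟨(i : ℕ) + 1, h⟩ ≠ 0)

instance (n : ℕ) : DecidablePred (P n) := fun _ => by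
  unfold P; infer_instance

lemma P_tail {n : ℕ} {f : Fin (n+1) → Fin 3} (hf : P (n+1) f) : P n (Fin.tail f) := by
  intro i h
  exact hf ⟨(i : ℕ) + 1, show (i : ℕ) + 1 < n + 1 by omega⟩
    (show (i : ℕ) + 1 + 1 < n + 1 by omega)

lemma P_cons {n : ℕ} (a : Fin 3) (g : Fin (n+1) → Fin 3) :
    P (n+2) (Fin.cons a g) ↔ (¬(a ≠ 0 ∧ g 0 ≠ 0)) ∧ P (n+1) g := by
  constructor
  · intro H
    refine ⟨?_, ?_⟩
    · exact H ⟨0, by omega⟩ (show 0 + 1 < n + 2 by omega)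
    · have := P_tail H
      simpa [Fin.tail_cons] using this
  · rintro ⟨h0, hg⟩ i
    induction i using Fin.cases with
    | zero =>
      intro h
      exact h0
    | succ i' =>
      intro h
      have h' : (i' : ℕ) + 1 < n + 1 := by
        have : (i' : ℕ) + 1 + 1 < n + 2 := h
        omega
      exact hg i' h'

lemma P_cons_zero {n : ℕ} (g : Fin n → Fin 3) :
    P (n+1) (Fin.cons 0 g) ↔ P n g := by
  constructor
  · intro H
    have := P_tail H
    simpa [Fin.tail_cons] using this
  · intro hg i
    induction i using Fin.cases with
    | zero =>
      intro h hc
      exact hc.1 rfl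
    | succ i' =>
      intro h
      have h' : (i' : ℕ) + 1 < n := by
        have : (i' : ℕ) + 1 + 1 < n + 1 := h
        omega
      exact hg i' h'

def B (n : ℕ) : ℕ := Fintype.card {f : Fin n → Fin 3 // P n f}
def A (n : ℕ) : ℕ := Fintype.card {f : Fin (n+1) → Fin 3 // f 0 = 0 ∧ P (n+1) f}

lemma A_eq (n : ℕ) : A n = B n := by
  apply Fintype.card_congr
  refine
    { toFun := fun f => ⟨Fin.tail f.1, P_tail f.2.2⟩
      invFun := fun g => ⟨Fin.cons 0 g.1, rfl, (P_cons_zero g.1).2 g.2⟩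
      left_inv := ?_
      right_inv := ?_ }
  · rintro ⟨f, h0, hf⟩
    apply Subtype.ext
    show Fin.cons 0 (Fin.tail f) = f
    rw [← h0, Fin.cons_self_tail]
  · rintro ⟨g, hg⟩
    apply Subtype.ext
    show Fin.tail (Fin.cons (0:Fin 3) g : Fin (n+1) → Fin 3) = g
    rw [Fin.tail_cons]

lemma B_zero : B 0 = 1 := by
  have : ∀ f : Fin 0 → Fin 3, P 0 f := by intro f i h; exact absurd i.isLt (by omega)
  rw [B, Fintype.card_congr (Equiv.subtypeUnivEquiv this)]
  simp

lemma B_one : B 1 = 3 := by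
  have : ∀ f : Fin 1 → Fin 3, P 1 f := by
    intro f i h
    have hi := i.isLt
    omega
  rw [B, Fintype.card_congr (Equiv.subtypeUnivEquiv this)]
  simp

lemma B_rec (n : ℕ) : B (n+2) = B (n+1) + 2 * B n := by
  have key : {f : Fin (n+2) → Fin 3 // P (n+2) f} ≃
      {g : Fin (n+1) → Fin 3 // P (n+1) g} ⊕
        ({a : Fin 3 // a ≠ 0} × {g : Fin (n+1) → Fin 3 // g 0 = 0 ∧ P (n+1) g}) := by
    refine
      { toFun := fun f =>
          if h : f.1 0 = 0 then Sum.inl ⟨Fin.tail f.1, P_tail f.2⟩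
          else Sum.inr ⟨⟨f.1 0, h⟩, ⟨Fin.tail f.1, ?_, P_tail f.2⟩⟩
        invFun := fun x =>
          match x with
          | Sum.inl g => ⟨Fin.cons 0 g.1, (P_cons 0 g.1).2 ⟨by simp, g.2⟩⟩
          | Sum.inr ⟨a, g⟩ => ⟨Fin.cons a.1 g.1,
              (P_cons a.1 g.1).2 ⟨fun hc => hc.2 g.2.1, g.2.2⟩⟩
        left_inv := ?_
        right_inv := ?_ }
    · -- Fin.tail f 0 = 0
      have hcond := f.2 ⟨0, by omega⟩ (show 0 + 1 < n + 2 by omega)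
      by_contra hne
      exact hcond ⟨h, hne⟩
    · rintro ⟨f, hf⟩
      dsimp only
      by_cases h : f 0 = 0
      · rw [dif_pos h]
        apply Subtype.ext
        show Fin.cons 0 (Fin.tail f) = f
        rw [← h, Fin.cons_self_tail]
      · rw [dif_neg h]
        apply Subtype.ext
        show Fin.cons (f 0) (Fin.tail f) = f
        exact Fin.cons_self_tail f
    · rintro (⟨g, hg⟩ | ⟨⟨a, ha⟩, ⟨g, hg0, hgP⟩⟩)
      · dsimp only
        rw [dif_pos (show (Fin.cons (0:Fin 3) g : Fin (n+2) → Fin 3) 0 = 0 from rfl)]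
        simp [Fin.tail_cons]
      · dsimp only
        rw [dif_neg (show ¬(Fin.cons a g : Fin (n+2) → Fin 3) 0 = 0 from
          fun hc => ha ((show (Fin.cons a g : Fin (n+2) → Fin 3) 0 = a from rfl) ▸ hc))]
        simp [Fin.tail_cons]
  rw [B, Fintype.card_congr key]
  rw [Fintype.card_sum, Fintype.card_prod]
  have h2 : Fintype.card {a : Fin 3 // a ≠ 0} = 2 := by decide
  rw [h2]
  have hA : Fintype.card {g : Fin (n+1) → Fin 3 // g 0 = 0 ∧ P (n+1) g} = B n := A_eq n
  rw [hA]
  rfl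

lemma B_eq_J : ∀ n, B n = J (n + 2)
  | 0 => by rw [B_zero]; rfl
  | 1 => by rw [B_one]; rfl
  | n + 2 => by
      rw [B_rec, B_eq_J (n+1), B_eq_J n]
      rfl

theorem count_admissible_startE_eq_jacobsthal (n : ℕ) (hn : 1 ≤ n) :
    Fintype.card {f : Fin n → Fin 3 //
      f ⟨0, hn⟩ = 0 ∧
      ∀ i : Fin n, ∀ h : (i : ℕ) + 1 < n,
        ¬(f i ≠ 0 ∧ f ⟨(i : ℕ) + 1, h⟩ ≠ 0)} = J (n + 1) := by
  obtain ⟨m, rfl⟩ : ∃ m, n = m + 1 := ⟨n - 1, by omega⟩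
  have e : {f : Fin (m+1) → Fin 3 //
      f ⟨0, hn⟩ = 0 ∧
      ∀ i : Fin (m+1), ∀ h : (i : ℕ) + 1 < m + 1,
        ¬(f i ≠ 0 ∧ f ⟨(i : ℕ) + 1, h⟩ ≠ 0)} ≃
      {f : Fin (m+1) → Fin 3 // f 0 = 0 ∧ P (m+1) f} :=
    Equiv.subtypeEquivRight (fun f => Iff.rfl)
  rw [Fintype.card_congr e]
  have : Fintype.card {f : Fin (m+1) → Fin 3 // f 0 = 0 ∧ P (m+1) f} = A m := rfl
  rw [this, A_eq, B_eq_J]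
end

section
/- For every natural number n, the product of two successive Jacobsthal numbers J(n)·J(n+1) is a triangular number; that is, there exists a natural number m such that 2·(J(n)·J(n+1)) = m·(m+1). -/
lemma J_succ (n : ℕ) :
    (Even n → J (n + 1) = 2 * J n + 1) ∧ (¬ Even n → 2 * J n = J (n + 1) + 1) := by
  induction n with
  | zero => simp [J]
  | succ k ih =>
    rcases Nat.even_or_odd k with hk | hk
    · have h1 := ih.1 hk
      constructor
      · intro h; exact absurd h (by simp [Nat.even_add_one, hk])
      · intro _; show 2 * J (k + 1) = J (k + 2) + 1
        simp [J, h1]; ring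
    · have h1 := ih.2 (Nat.not_even_iff_odd.mpr hk)
      constructor
      · intro _; show J (k + 2) = 2 * J (k + 1) + 1
        have : J (k + 2) = J (k + 1) + 2 * J k := rfl
        omega
      · intro h; exact absurd (Nat.even_add_one.mpr (Nat.not_even_iff_odd.mpr hk)) h

theorem jacobsthal_product_triangular (n : ℕ) :
    ∃ m : ℕ, 2 * (J n * J (n + 1)) = m * (m + 1) := by
  rcases Nat.even_or_odd n with h | h
  · exact ⟨2 * J n, by rw [(J_succ n).1 h]; ring⟩
  · refine ⟨J (n + 1), ?_⟩
    have := (J_succ n).2 (Nat.not_even_iff_odd.mpr h)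
    calc 2 * (J n * J (n + 1)) = (2 * J n) * J (n + 1) := by ring
    _ = (J (n + 1) + 1) * J (n + 1) := by rw [this]
    _ = J (n + 1) * (J (n + 1) + 1) := by ring
end
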